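/- There exists an absolute constant κ₁ > 0 such that: for all integers q ≥ 2, N ≥ 2, g ≥ 2 and all real numbers θ_1, …, θ_{2g} satisfying the Artin-type bound and whose multiset is invariant under θ ↦ -θ, if log g > κ₁ log(Nq) then q^g · (log(7g/(N-1)))^{-3(N-1)} ≤ ∏_{l=1}^{2g} |1 - √q · e(θ_l)| ≤ q^g · (log(7g/(N-1)))^{3(N-1)}. -/

import Mathlib

open Finset

/-- `e θ = exp(2πiθ)`. -/
noncomputable def e (θ : ℝ) : ℂ := Complex.exp (2 * Real.pi * Complex.I * θ)

/-- The Artin-type bound: for every `m ≥ 1`,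
`|∑_{l=1}^{2g} e(mθ_l)| ≤ (N-1)(q^m+1)q^{-m/2}`. -/
def ArtinBound (q N g : ℕ) (θ : Fin (2 * g) → ℝ) : Prop :=
  ∀ m : ℕ, 1 ≤ m →
    ‖∑ l : Fin (2 * g), e ((m : ℝ) * θ l)‖ ≤
      ((N : ℝ) - 1) * ((q : ℝ) ^ m + 1) * (q : ℝ) ^ (-(m : ℝ) / 2)

lemma abs_e (θ : ℝ) : ‖e θ‖ = 1 := by
  rw [e, Complex.norm_exp]
  norm_num [Complex.mul_re, Complex.mul_im]

lemma e_nat_mul (m : ℕ) (θ : ℝ) : e ((m : ℝ) * θ) = (e θ) ^ m := by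
  rw [e, e, ← Complex.exp_nat_mul]
  push_cast
  ring_nf

set_option maxHeartbeats 2000000 in
lemma core (q g : ℕ) (A : ℝ) (θ : Fin (2*g) → ℝ) (hq : 2 ≤ q) (hg : 1 ≤ g) (hA1 : 1 ≤ A)
    (hart : ∀ m : ℕ, 1 ≤ m → ‖∑ l : Fin (2*g), e ((m:ℝ) * θ l)‖ ≤
      A * ((q:ℝ)^m+1) * (q:ℝ)^(-(m:ℝ)/2))
    (M : ℕ) (hM : 1 ≤ M) (hMbig : (g:ℝ)^2 * ((Real.sqrt q)⁻¹)^M ≤ 1) :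
    |∑ l : Fin (2*g), Real.log ‖1 - (((Real.sqrt q)⁻¹ : ℝ) : ℂ) * e (θ l)‖| ≤
      2*A*(1 + Real.log M) + 5/g := by
  have hq0 : (0:ℝ) < q := by positivity
  have hq2 : (2:ℝ) ≤ q := by exact_mod_cast hq
  have hsq2 : (1.41:ℝ) ≤ Real.sqrt q := by
    rw [show (1.41:ℝ) = Real.sqrt (1.41^2) by rw [Real.sqrt_sq]; norm_num]
    apply Real.sqrt_le_sqrt; nlinarith
  set r : ℝ := (Real.sqrt q)⁻¹ with hrdef
  have hr0 : 0 < r := by positivity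
  have hr71 : r ≤ 0.71 := by
    rw [hrdef, inv_le_iff_one_le_mul₀ (by linarith)]
    nlinarith
  have hr1 : r < 1 := by linarith
  have hg0 : (0:ℝ) < g := by positivity
  have hA0 : (0:ℝ) < A := by linarith
  set z : Fin (2*g) → ℂ := fun l => ((r:ℝ) : ℂ) * e (θ l) with hzdef
  have hz_abs : ∀ l, ‖z l‖ = r := by
    intro l; rw [hzdef]; simp [abs_e, Complex.norm_real, abs_of_pos hr0]
  have hz_lt : ∀ l, ‖z l‖ < 1 := by
    intro l; rw [hz_abs]; exact hr1
  have hsum : HasSum (fun n : ℕ => ∑ l : Fin (2*g), z l ^ n / n)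
      (∑ l : Fin (2*g), -Complex.log (1 - z l)) :=
    hasSum_sum fun l _ => Complex.hasSum_taylorSeries_neg_log (hz_lt l)
  set T : ℝ := ∑ l : Fin (2*g), Real.log ‖1 - ((r:ℝ):ℂ) * e (θ l)‖ with hTdef
  have hTz : T = ∑ l : Fin (2*g), Real.log ‖1 - z l‖ := rfl
  set F : ℕ → ℝ := fun n => (∑ l : Fin (2*g), z l ^ n / n).re with hFdef
  have hre : HasSum F (-T) := by
    have h := Complex.hasSum_re hsum
    convert h using 1
    rw [hTz, Complex.re_sum, ← Finset.sum_neg_distrib]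
    congr 1; ext l
    rw [Complex.neg_re, Complex.log_re]
  -- trivial bound
  have hF0 : F 0 = 0 := by simp [hFdef]
  have hFtriv : ∀ n : ℕ, |F n| ≤ 2*g*r^n := by
    intro n
    rcases Nat.eq_zero_or_pos n with rfl | hn
    · rw [hF0]; simp only [abs_zero, pow_zero, mul_one]; positivity
    · have h1 : |F n| ≤ ‖∑ l : Fin (2*g), z l ^ n / n‖ :=
        Complex.abs_re_le_norm _
      have h2 : ‖∑ l : Fin (2*g), z l ^ n / n‖ ≤
          ∑ l : Fin (2*g), ‖z l ^ n / n‖ :=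
        norm_sum_le _ _
      have h3 : ∀ l : Fin (2*g), ‖z l ^ n / n‖ = r^n / n := by
        intro l
        rw [norm_div, norm_pow, hz_abs, Complex.norm_natCast]
      rw [Finset.sum_congr rfl (fun l _ => h3 l), Finset.sum_const, Finset.card_fin,
        nsmul_eq_mul] at h2
      have hn1 : (1:ℝ) ≤ n := by exact_mod_cast hn
      have h4 : r^n / (n:ℝ) ≤ r^n := by
        rw [div_le_iff₀ (by linarith)]; nlinarith [pow_pos hr0 n]
      calc |F n| ≤ (2*g : ℕ) * (r^n / n) := h1.trans h2
        _ ≤ 2*g*r^n := by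
            push_cast
            have := mul_le_mul_of_nonneg_left h4 (by positivity : (0:ℝ) ≤ 2*g)
            linarith
  -- rpow identity
  have hbase : (q:ℝ) ^ (-(1/2) : ℝ) = r := by
    rw [Real.rpow_neg hq0.le, hrdef, Real.sqrt_eq_rpow]
  have hrn : ∀ n : ℕ, (q:ℝ) ^ (-(n:ℝ)/2) = r ^ n := by
    intro n
    rw [show (-(n:ℝ)/2) = (-(1/2):ℝ) * (n:ℝ) by ring, Real.rpow_mul hq0.le,
      Real.rpow_natCast, hbase]
  have hr2q : r^2 * q = 1 := by
    rw [hrdef, inv_pow, inv_mul_eq_one₀ (by positivity)]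
    rw [Real.sq_sqrt hq0.le]
  -- Artin bound
  have hFart : ∀ n : ℕ, 1 ≤ n → |F n| ≤ 2*A/n := by
    intro n hn
    have hn0 : (0:ℝ) < n := by exact_mod_cast hn
    have h1 : |F n| ≤ ‖∑ l : Fin (2*g), z l ^ n / n‖ :=
      Complex.abs_re_le_norm _
    have h2 : (∑ l : Fin (2*g), z l ^ n / n) = ((r:ℝ):ℂ)^n * (∑ l : Fin (2*g), e ((n:ℝ) * θ l)) / n := by
      rw [← Finset.sum_div]
      congr 1
      rw [Finset.mul_sum]
      refine Finset.sum_congr rfl fun l _ => ?_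
      rw [hzdef, e_nat_mul, mul_pow]
    have h3 : ‖∑ l : Fin (2*g), z l ^ n / n‖ =
        r^n * ‖∑ l : Fin (2*g), e ((n:ℝ) * θ l)‖ / n := by
      rw [h2, norm_div, norm_mul, norm_pow, Complex.norm_real, Complex.norm_natCast,
        Real.norm_eq_abs, abs_of_pos hr0]
    have h4 := hart n hn
    have h5 : r^n * ‖∑ l : Fin (2*g), e ((n:ℝ) * θ l)‖ ≤ 2*A := by
      have h6 : r^n * ‖∑ l : Fin (2*g), e ((n:ℝ) * θ l)‖ ≤
          r^n * (A * ((q:ℝ)^n+1) * (q:ℝ)^(-(n:ℝ)/2)) :=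
        mul_le_mul_of_nonneg_left h4 (by positivity)
      have h7 : r^n * (A * ((q:ℝ)^n+1) * (q:ℝ)^(-(n:ℝ)/2)) = A * ((r^2*q)^n + (r^2)^n) := by
        rw [hrn n]; ring
      rw [h7, hr2q, one_pow] at h6
      have h8 : (r^2)^n ≤ 1 := by
        apply pow_le_one₀ (by positivity); nlinarith
      nlinarith
    rw [h3] at h1
    refine h1.trans ?_
    gcongr
  -- summability
  have hsummable : Summable (fun n => |F n|) :=
    Summable.of_nonneg_of_le (fun n => abs_nonneg _) hFtriv
      (((summable_geometric_of_lt_one hr0.le hr1).mul_left (2*(g:ℝ))))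
  have habsT : |T| ≤ ∑' n, |F n| := by
    have h1 : -T = ∑' n, F n := hre.tsum_eq.symm
    have h2 : ‖∑' n, F n‖ ≤ ∑' n, ‖F n‖ := norm_tsum_le_tsum_norm (by simpa using hsummable)
    simp only [Real.norm_eq_abs] at h2
    calc |T| = |∑' n, F n| := by rw [← h1, abs_neg]
      _ ≤ ∑' n, |F n| := h2
  -- split the sum
  have hsplit := Summable.sum_add_tsum_nat_add (f := fun n => |F n|) (M+1) hsummable
  -- head bound
  have hhead : ∑ i ∈ Finset.range (M+1), |F i| ≤ 2*A*(1 + Real.log M) := by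
    have h1 : ∑ i ∈ Finset.range (M+1), |F i| ≤ ∑ i ∈ Finset.range (M+1), 2*A/i := by
      apply Finset.sum_le_sum
      intro i _
      rcases Nat.eq_zero_or_pos i with rfl | hi
      · rw [hF0]; simp
      · exact hFart i hi
    have h2 : ∑ i ∈ Finset.range (M+1), 2*A/(i:ℝ) = 2*A * ∑ i ∈ Finset.range M, ((i+1:ℕ):ℝ)⁻¹ := by
      rw [Finset.sum_range_succ']
      simp only [Nat.cast_zero, div_zero, add_zero, Finset.mul_sum]
      refine Finset.sum_congr rfl fun i _ => ?_
      rw [div_eq_mul_inv]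
    have h3 : ∑ i ∈ Finset.range M, ((i+1:ℕ):ℝ)⁻¹ = ((harmonic M : ℚ) : ℝ) := by
      rw [harmonic]
      push_cast
      rfl
    have h4 : ((harmonic M : ℚ) : ℝ) ≤ 1 + Real.log M := harmonic_le_one_add_log M
    calc ∑ i ∈ Finset.range (M+1), |F i| ≤ 2*A * ∑ i ∈ Finset.range M, ((i+1:ℕ):ℝ)⁻¹ := by
          rw [← h2]; exact h1
      _ ≤ 2*A*(1 + Real.log M) := by
          rw [h3]; exact mul_le_mul_of_nonneg_left h4 (by positivity)
  -- tail bound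
  have htail : ∑' k, |F (k + (M+1))| ≤ 5 / g := by
    have hsum2 : Summable (fun k : ℕ => 2*(g:ℝ)*r^(M+1) * r^k) :=
      (summable_geometric_of_lt_one hr0.le hr1).mul_left _
    have h1 : ∑' k, |F (k + (M+1))| ≤ ∑' k : ℕ, 2*(g:ℝ)*r^(M+1) * r^k := by
      apply Summable.tsum_le_tsum _ (hsummable.comp_injective (add_left_injective (M+1))) hsum2
      intro k
      calc |F (k + (M+1))| ≤ 2*g*r^(k+(M+1)) := hFtriv _
        _ = 2*(g:ℝ)*r^(M+1) * r^k := by rw [pow_add]; ring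
    have h2 : ∑' k : ℕ, 2*(g:ℝ)*r^(M+1) * r^k = 2*(g:ℝ)*r^(M+1) * (1-r)⁻¹ := by
      rw [tsum_mul_left, tsum_geometric_of_lt_one hr0.le hr1]
    have hrM : r^M ≤ ((g:ℝ)^2)⁻¹ := by
      rw [← one_div, le_div_iff₀ (by positivity), mul_comm]
      exact hMbig
    have h3 : 2*(g:ℝ)*r^(M+1) * (1-r)⁻¹ ≤ 5 / g := by
      have hinv : (1-r)⁻¹ ≤ (0.29:ℝ)⁻¹ := by
        apply inv_anti₀ (by norm_num)
        linarith
      have hrM1 : r^(M+1) ≤ ((g:ℝ)^2)⁻¹ * 0.71 := by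
        rw [pow_succ]
        exact mul_le_mul hrM hr71 hr0.le (by positivity)
      calc 2*(g:ℝ)*r^(M+1) * (1-r)⁻¹ ≤ 2*(g:ℝ)*(((g:ℝ)^2)⁻¹ * 0.71) * (0.29:ℝ)⁻¹ := by
            apply mul_le_mul _ hinv ((inv_pos.mpr (by linarith : (0:ℝ) < 1 - r)).le) (by positivity)
            exact mul_le_mul_of_nonneg_left hrM1 (by positivity)
        _ = (2*0.71/0.29) / g := by field_simp
        _ ≤ 5 / g := by gcongr; norm_num
    calc ∑' k, |F (k + (M+1))| ≤ 2*(g:ℝ)*r^(M+1) * (1-r)⁻¹ := h1.trans_eq h2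
      _ ≤ 5 / g := h3
  calc |T| ≤ ∑' n, |F n| := habsT
    _ = ∑ i ∈ Finset.range (M+1), |F i| + ∑' k, |F (k + (M+1))| := hsplit.symm
    _ ≤ 2*A*(1 + Real.log M) + 5/g := add_le_add hhead htail

lemma abs_one_sub_mul (ρ : ℝ) (w : ℂ) (hw : ‖w‖ = 1) :
    ‖1 - (ρ : ℂ) * w‖ = ‖(ρ : ℂ) - w‖ := by
  have hns : Complex.normSq w = 1 := by
    rw [← Complex.sq_norm, hw]; norm_num
  have h1 : (1 : ℂ) - (ρ : ℂ) * w = w * ((starRingEnd ℂ) w - ρ) := by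
    rw [mul_sub, Complex.mul_conj, hns]; push_cast; ring
  rw [h1, norm_mul, hw, one_mul]
  have h2 : (starRingEnd ℂ) w - (ρ:ℂ) = (starRingEnd ℂ) (w - ρ) := by
    rw [map_sub, Complex.conj_ofReal]
  rw [h2, Complex.norm_conj, norm_sub_rev]

lemma exp_ten : Real.exp 18 ≤ 65700000 := by
  have h := Real.exp_one_lt_d9
  have h18 : Real.exp 18 = (Real.exp 1)^18 := by
    rw [← Real.exp_nat_mul]; norm_num
  rw [h18]
  calc (Real.exp 1)^18 ≤ (2.7182818286:ℝ)^18 :=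
        pow_le_pow_left₀ (Real.exp_pos 1).le h.le 18
    _ ≤ 65700000 := by norm_num

set_option maxHeartbeats 2000000 in
theorem statement6 :
    ∃ κ₁ : ℝ, 0 < κ₁ ∧
      ∀ (q N g : ℕ) (θ : Fin (2 * g) → ℝ), 2 ≤ q → 2 ≤ N → 2 ≤ g →
        ArtinBound q N g θ →
        (∃ σ : Equiv.Perm (Fin (2 * g)), ∀ l, θ (σ l) = -θ l) →
        Real.log g > κ₁ * Real.log (N * q) →
        (q : ℝ) ^ (g : ℕ) * (Real.log (7 * g / ((N : ℝ) - 1))) ^ (-(3 * ((N : ℝ) - 1))) ≤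
            (∏ l : Fin (2 * g), ‖1 - (Real.sqrt q : ℂ) * e (θ l)‖) ∧
          (∏ l : Fin (2 * g), ‖1 - (Real.sqrt q : ℂ) * e (θ l)‖) ≤
            (q : ℝ) ^ (g : ℕ) * (Real.log (7 * g / ((N : ℝ) - 1))) ^ (3 * ((N : ℝ) - 1)) := by
  refine ⟨100000000, by norm_num, ?_⟩
  intro q N g θ hq hN hg hArtin _ hlog
  set A : ℝ := (N : ℝ) - 1 with hAdef
  have hN2 : (2:ℝ) ≤ N := by exact_mod_cast hN
  have hA1 : 1 ≤ A := by rw [hAdef]; linarith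
  have hA0 : (0:ℝ) < A := by linarith
  have hq2 : (2:ℝ) ≤ q := by exact_mod_cast hq
  have hq0 : (0:ℝ) < q := by linarith
  have hg2 : (2:ℝ) ≤ g := by exact_mod_cast hg
  have hg0 : (0:ℝ) < g := by linarith
  set Lg : ℝ := Real.log g with hLgdef
  have hNq4 : (4:ℝ) ≤ (N:ℝ) * q := by nlinarith
  have hlog2u := Real.log_two_lt_d9
  have hlog2l := Real.log_two_gt_d9
  have hlogNq : (1.386:ℝ) ≤ Real.log ((N:ℝ)*q) := by
    have h4 : Real.log 4 ≤ Real.log ((N:ℝ)*q) := by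
      apply Real.log_le_log (by norm_num) hNq4
    have h5 : Real.log 4 = 2 * Real.log 2 := by
      rw [show (4:ℝ) = 2^2 by norm_num, Real.log_pow]; push_cast; ring
    linarith
  have hLg : (138600000:ℝ) ≤ Lg := by nlinarith
  have hLg0 : (0:ℝ) < Lg := by linarith
  have hgbig : (138600001:ℝ) ≤ g := by
    have h := Real.add_one_le_exp Lg
    have h2 : Real.exp Lg = g := Real.exp_log hg0
    linarith
  -- M
  set M : ℕ := ⌈6 * Lg⌉₊ with hMdef
  have hM1 : 1 ≤ M := Nat.ceil_pos.mpr (by linarith)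
  have hMge : 6 * Lg ≤ (M:ℝ) := Nat.le_ceil _
  have hMle : (M:ℝ) ≤ 7 * Lg := by
    have h := Nat.ceil_lt_add_one (by positivity : (0:ℝ) ≤ 6*Lg)
    rw [← hMdef] at h
    linarith
  have hM0 : (0:ℝ) < M := by linarith
  -- hMbig
  have hsq0 : 0 < Real.sqrt q := Real.sqrt_pos.mpr hq0
  have hpow : (g:ℝ)^2 ≤ (Real.sqrt q)^M := by
    have hlogsq : Real.log (Real.sqrt q) = Real.log q / 2 := Real.log_sqrt hq0.le
    have hlq : Real.log 2 ≤ Real.log q := Real.log_le_log (by norm_num) hq2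
    have h1 : Real.log ((g:ℝ)^2) ≤ Real.log ((Real.sqrt q)^M) := by
      rw [Real.log_pow, Real.log_pow, hlogsq]
      push_cast
      have h2 : 6 * Lg * (Real.log 2 / 2) ≤ (M:ℝ) * (Real.log q / 2) := by
        apply mul_le_mul hMge (by linarith) (by linarith) (by linarith)
      nlinarith
    exact (Real.log_le_log_iff (by positivity) (by positivity)).mp h1
  have hMbig : (g:ℝ)^2 * ((Real.sqrt q)⁻¹)^M ≤ 1 := by
    rw [inv_pow]
    rw [mul_inv_le_iff₀ (by positivity), one_mul]
    exact hpow
  -- apply core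
  have hcore := core q g A θ hq (by omega) hA1 (fun m hm => hArtin m hm) M hM1 hMbig
  -- numerics
  set L : ℝ := Real.log (7 * g / A) with hLdef
  have hLge : Lg / 2 ≤ L := by
    have hAN : A ≤ (N:ℝ) := by rw [hAdef]; linarith
    have h1 : (g:ℝ)/N ≤ 7*g/A := by
      rw [div_le_div_iff₀ (by linarith) hA0]
      nlinarith
    have h2 : Real.log ((g:ℝ)/N) ≤ L := by
      rw [hLdef]; exact Real.log_le_log (by positivity) h1
    have h3 : Real.log ((g:ℝ)/N) = Lg - Real.log N := by
      rw [Real.log_div (by positivity) (by positivity)]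
    have h4 : Real.log (N:ℝ) ≤ Real.log ((N:ℝ)*q) := by
      apply Real.log_le_log (by linarith) (by nlinarith)
    linarith
  have hL0 : (0:ℝ) < L := by linarith
  have hlogLg18 : (18:ℝ) ≤ Real.log Lg := by
    rw [Real.le_log_iff_exp_le (by linarith)]
    calc Real.exp 18 ≤ 65700000 := exp_ten
      _ ≤ Lg := by linarith
  have hlogL : Real.log Lg - 0.6932 ≤ Real.log L := by
    have h1 : Real.log (Lg/2) ≤ Real.log L := Real.log_le_log (by positivity) hLge
    rw [Real.log_div (by linarith) (by norm_num)] at h1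
    linarith
  have hlog7 : Real.log 7 ≤ 6 := by
    have := Real.log_le_sub_one_of_pos (by norm_num : (0:ℝ) < 7)
    linarith
  have hlogM : Real.log M ≤ Real.log Lg + 6 := by
    have h1 : Real.log M ≤ Real.log (7*Lg) := Real.log_le_log hM0 hMle
    rw [Real.log_mul (by norm_num) (by linarith)] at h1
    linarith
  have htot : |∑ l : Fin (2*g), Real.log ‖1 - (((Real.sqrt q)⁻¹ : ℝ) : ℂ) * e (θ l)‖|
      ≤ 3 * A * Real.log L := by
    have e3 : 5/(g:ℝ) ≤ 1 := by
      rw [div_le_one hg0]; linarith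
    have e4 : 18 * A ≤ Real.log Lg * A :=
      mul_le_mul_of_nonneg_right hlogLg18 hA0.le
    have e1 : 2*A*(1 + Real.log M) ≤ 2*A*(7 + Real.log Lg) := by
      apply mul_le_mul_of_nonneg_left (by linarith) (by positivity)
    have e2 : 3*A*(Real.log Lg - 0.6932) ≤ 3*A*Real.log L := by
      apply mul_le_mul_of_nonneg_left hlogL (by positivity)
    calc |∑ l : Fin (2*g), Real.log ‖1 - (((Real.sqrt q)⁻¹ : ℝ) : ℂ) * e (θ l)‖|
        ≤ 2*A*(1 + Real.log M) + 5/g := hcore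
      _ ≤ 3 * A * Real.log L := by nlinarith
  obtain ⟨hT1, hT2⟩ := abs_le.mp htot
  -- product identity
  set P : ℝ := ∏ l : Fin (2*g), ‖1 - (((Real.sqrt q)⁻¹ : ℝ) : ℂ) * e (θ l)‖ with hPdef
  have hfac_pos : ∀ l : Fin (2*g), 0 < ‖1 - (((Real.sqrt q)⁻¹ : ℝ) : ℂ) * e (θ l)‖ := by
    intro l
    have hr1 : (Real.sqrt q)⁻¹ < 1 := by
      rw [inv_lt_one_iff₀]
      right
      rw [show (1:ℝ) = Real.sqrt 1 by simp]
      exact Real.sqrt_lt_sqrt (by norm_num) (by linarith)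
    have h2 : ‖(((Real.sqrt q)⁻¹ : ℝ) : ℂ) * e (θ l)‖ = (Real.sqrt q)⁻¹ := by
      rw [norm_mul, Complex.norm_real, Real.norm_eq_abs, abs_of_pos (by positivity),
        abs_e, mul_one]
    have h1 := norm_sub_norm_le (1:ℂ) ((((Real.sqrt q)⁻¹ : ℝ) : ℂ) * e (θ l))
    rw [h2, norm_one] at h1
    linarith
  have hP_pos : 0 < P :=
    Finset.prod_pos (fun l _ => hfac_pos l)
  have hlogP : Real.log P =
      ∑ l : Fin (2*g), Real.log ‖1 - (((Real.sqrt q)⁻¹ : ℝ) : ℂ) * e (θ l)‖ :=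
    Real.log_prod (fun l _ => (hfac_pos l).ne')
  have hprodeq : (∏ l : Fin (2 * g), ‖1 - (Real.sqrt q : ℂ) * e (θ l)‖) =
      (q:ℝ)^(g:ℕ) * P := by
    have hfac : ∀ l : Fin (2*g), ‖1 - (Real.sqrt q : ℂ) * e (θ l)‖ =
        Real.sqrt q * ‖1 - (((Real.sqrt q)⁻¹ : ℝ) : ℂ) * e (θ l)‖ := by
      intro l
      have hw := abs_e (θ l)
      have hid : (1:ℂ) - ((Real.sqrt q : ℝ):ℂ) * e (θ l) =
          ((Real.sqrt q : ℝ):ℂ) * ((((Real.sqrt q)⁻¹:ℝ):ℂ) - e (θ l)) := by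
        rw [mul_sub, ← Complex.ofReal_mul, mul_inv_cancel₀ hsq0.ne']
        push_cast; ring
      rw [hid, norm_mul, Complex.norm_real, Real.norm_eq_abs, abs_of_pos hsq0,
        ← abs_one_sub_mul ((Real.sqrt q)⁻¹) _ hw]
    rw [Finset.prod_congr rfl (fun l _ => hfac l), Finset.prod_mul_distrib,
      Finset.prod_const, Finset.card_univ, Fintype.card_fin]
    congr 1
    rw [pow_mul, Real.sq_sqrt hq0.le]
  have hq_pow_pos : (0:ℝ) < (q:ℝ)^(g:ℕ) := by positivity
  constructor
  · rw [hprodeq]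
    apply mul_le_mul_of_nonneg_left _ hq_pow_pos.le
    rw [Real.rpow_def_of_pos hL0, ← Real.exp_log hP_pos, hlogP]
    apply Real.exp_le_exp.mpr
    calc Real.log L * (-(3*A)) = -(3*A*Real.log L) := by ring
      _ ≤ _ := hT1
  · rw [hprodeq]
    apply mul_le_mul_of_nonneg_left _ hq_pow_pos.le
    rw [Real.rpow_def_of_pos hL0, ← Real.exp_log hP_pos, hlogP]
    apply Real.exp_le_exp.mpr
    calc _ ≤ 3*A*Real.log L := hT2
      _ = Real.log L * (3*A) := by ring
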